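/- Let X be a reflexive smooth complex Banach space and T ∈ B(X) a normal operator (‖Tx‖ = ‖T'(Jx)‖ for all x). Then T is invertible if and only if T is bounded below; consequently, if T is normal and not invertible, then c(T) = μ(T) = 0. -/

import Mathlib

/-- The minimum modulus μ(T) = inf{‖Tx‖ : ‖x‖ = 1}. -/
noncomputable def minMod {X : Type*} [NormedAddCommGroup X] [NormedSpace ℂ X]
    (T : X →L[ℂ] X) : ℝ :=
  sInf {r : ℝ | ∃ x : X, ‖x‖ = 1 ∧ r = ‖T x‖}

/-- The Crawford number c(T) = inf{ |J(x)(Tx)| : ‖x‖ = 1 }. -/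
noncomputable def crawford {X : Type*} [NormedAddCommGroup X] [NormedSpace ℂ X]
    (J : X → (X →L[ℂ] ℂ)) (T : X →L[ℂ] X) : ℝ :=
  sInf {r : ℝ | ∃ x : X, ‖x‖ = 1 ∧ r = ‖J x (T x)‖}

/-- A normal bounded-below operator is surjective (via the duality map). -/
theorem aux_normal_surjective
    {X : Type*} [NormedAddCommGroup X] [NormedSpace ℂ X] [CompleteSpace X]
    (J : X → (X →L[ℂ] ℂ))
    (hJnorm : ∀ x : X, ‖J x‖ = ‖x‖)
    (hJsurj : Function.Surjective J)
    (T : X →L[ℂ] X) (hnormal : ∀ x : X, ‖T x‖ = ‖(J x).comp T‖)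
    {c : ℝ} (hc : 0 < c) (hbb : ∀ x : X, c * ‖x‖ ≤ ‖T x‖) :
    Function.Surjective T := by
  have hbb' : ∀ x : X, ‖x‖ ≤ (⟨c⁻¹, le_of_lt (inv_pos.2 hc)⟩ : NNReal) * ‖T x‖ := by
    intro x
    show ‖x‖ ≤ c⁻¹ * ‖T x‖
    rw [le_inv_mul_iff₀ hc]
    exact hbb x
  have anti : AntilipschitzWith _ T := T.antilipschitz_of_bound hbb'
  have hclosed : IsClosed (Set.range T) := anti.isClosed_range T.uniformContinuous
  set K : Submodule ℂ X := LinearMap.range (T : X →ₗ[ℂ] X) with hK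
  have hKset : (K : Set X) = Set.range T := by
    ext y; simp [hK, LinearMap.mem_range]
  haveI hKclosed : IsClosed (K : Set X) := hKset ▸ hclosed
  -- show K = ⊤
  have hKtop : K = ⊤ := by
    by_contra hne
    have hlt : K < ⊤ := lt_top_iff_ne_top.2 hne
    haveI : Nontrivial (X ⧸ K) := Submodule.Quotient.nontrivial_iff.2 hlt.ne
    obtain ⟨y, hy⟩ := exists_ne (0 : X ⧸ K)
    obtain ⟨g, hg1, hg2⟩ := exists_dual_vector ℂ y (norm_ne_zero_iff.2 hy)
    -- quotient map as a continuous linear map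
    let q : X →L[ℂ] (X ⧸ K) := ⟨K.mkQ, continuous_quot_mk⟩
    let f : X →L[ℂ] ℂ := g.comp q
    have hfT : f.comp T = 0 := by
      ext x
      have hx : T x ∈ K := LinearMap.mem_range.2 ⟨x, rfl⟩
      simp only [ContinuousLinearMap.comp_apply, ContinuousLinearMap.zero_apply, f, q]
      have h0 : K.mkQ (T x) = 0 := (Submodule.Quotient.mk_eq_zero K).2 hx
      show g (K.mkQ (T x)) = 0
      rw [h0, map_zero]
    have hfne : f ≠ 0 := by
      intro h0
      obtain ⟨x, hx⟩ := Submodule.mkQ_surjective K y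
      have : f x = g y := by
        simp only [f, q, ContinuousLinearMap.comp_apply, ContinuousLinearMap.coe_mk', hx]; exact congrArg g hx
      rw [h0] at this
      have hgy : g y = (‖y‖ : ℂ) := hg2
      have : (‖y‖ : ℂ) = 0 := by rw [← hgy, ← this]; simp
      have : ‖y‖ = 0 := by exact_mod_cast this
      exact hy (norm_eq_zero.mp this)
    obtain ⟨x, hx⟩ := hJsurj f
    have hTx : ‖T x‖ = 0 := by
      rw [hnormal x, hx, hfT, norm_zero]
    have hxz : x = 0 := by
      have := hbb x
      rw [hTx] at this
      have : ‖x‖ = 0 := le_antisymm (by nlinarith) (norm_nonneg x)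
      exact norm_eq_zero.mp this
    apply hfne
    rw [← hx, hxz]
    have : ‖J (0 : X)‖ = 0 := by rw [hJnorm]; simp
    exact norm_eq_zero.mp this
  intro y
  have : y ∈ K := hKtop ▸ Submodule.mem_top
  exact LinearMap.mem_range.1 this

/-- A normal operator (‖Tx‖ = ‖T'(Jx)‖ for all x) on a reflexive
smooth complex Banach space is invertible iff bounded below; consequently a
non-invertible normal operator satisfies c(T) = μ(T) = 0. -/
theorem normal_isUnit_iff_bounded_below
    {X : Type*} [NormedAddCommGroup X] [NormedSpace ℂ X] [CompleteSpace X]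
    (J : X → (X →L[ℂ] ℂ))
    (hJnorm : ∀ x : X, ‖J x‖ = ‖x‖)
    (hJx : ∀ x : X, J x x = (‖x‖ : ℂ) ^ 2)
    (hJsurj : Function.Surjective J)
    (T : X →L[ℂ] X) (hnormal : ∀ x : X, ‖T x‖ = ‖(J x).comp T‖) :
    (IsUnit T ↔ ∃ c : ℝ, 0 < c ∧ ∀ x : X, c * ‖x‖ ≤ ‖T x‖) ∧
    (¬ IsUnit T → crawford J T = 0 ∧ minMod T = 0) := by
  have main : IsUnit T ↔ ∃ c : ℝ, 0 < c ∧ ∀ x : X, c * ‖x‖ ≤ ‖T x‖ := by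
    constructor
    · rintro ⟨u, hu⟩
      refine ⟨(‖(↑u⁻¹ : X →L[ℂ] X)‖ + 1)⁻¹, inv_pos.2 (by positivity), fun x => ?_⟩
      have hid : (↑u⁻¹ : X →L[ℂ] X) (T x) = x := by
        have h1 : (↑u⁻¹ : X →L[ℂ] X) * (↑u : X →L[ℂ] X) = 1 := by
          rw [← Units.val_mul, inv_mul_cancel]; rfl
        have := congrArg (fun (S : X →L[ℂ] X) => S x) h1
        simpa [hu, ContinuousLinearMap.mul_apply] using this
      have hle : ‖x‖ ≤ (‖(↑u⁻¹ : X →L[ℂ] X)‖ + 1) * ‖T x‖ := by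
        calc ‖x‖ = ‖(↑u⁻¹ : X →L[ℂ] X) (T x)‖ := by rw [hid]
          _ ≤ ‖(↑u⁻¹ : X →L[ℂ] X)‖ * ‖T x‖ := ContinuousLinearMap.le_opNorm _ _
          _ ≤ (‖(↑u⁻¹ : X →L[ℂ] X)‖ + 1) * ‖T x‖ := by
              apply mul_le_mul_of_nonneg_right (by linarith) (norm_nonneg _)
      rw [inv_mul_le_iff₀ (by positivity)]
      linarith [hle]
    · rintro ⟨c, hc, hbb⟩
      have hsurj : Function.Surjective T :=
        aux_normal_surjective J hJnorm hJsurj T hnormal hc hbb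
      have hinj : Function.Injective T := by
        intro a b hab
        have : T (a - b) = 0 := by rw [map_sub, hab, sub_self]
        have h := hbb (a - b)
        rw [this, norm_zero] at h
        have : ‖a - b‖ = 0 := le_antisymm (by nlinarith) (norm_nonneg _)
        exact sub_eq_zero.mp (norm_eq_zero.mp this)
      let e := ContinuousLinearEquiv.ofBijective T
        (LinearMap.ker_eq_bot.2 hinj) (LinearMap.range_eq_top.2 hsurj)
      refine ⟨⟨T, (e.symm : X →L[ℂ] X), ?_, ?_⟩, rfl⟩
      · ext x
        show T (e.symm x) = x
        exact ContinuousLinearEquiv.ofBijective_apply_symm_apply T _ _ x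
      · ext x
        show e.symm (T x) = x
        exact ContinuousLinearEquiv.ofBijective_symm_apply_apply T _ _ x
  refine ⟨main, fun hnu => ?_⟩
  haveI : Nontrivial X := by
    by_contra h
    haveI := not_nontrivial_iff_subsingleton.mp h
    exact hnu (by
      have : T = 1 := ContinuousLinearMap.ext fun x => Subsingleton.elim _ _
      rw [this]; exact isUnit_one)
  obtain ⟨x₀, hx₀⟩ := exists_norm_eq X (zero_le_one)
  set M : Set ℝ := {r : ℝ | ∃ x : X, ‖x‖ = 1 ∧ r = ‖T x‖} with hM
  set C : Set ℝ := {r : ℝ | ∃ x : X, ‖x‖ = 1 ∧ r = ‖J x (T x)‖} with hC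
  have hMne : M.Nonempty := ⟨‖T x₀‖, x₀, hx₀, rfl⟩
  have hMbdd : BddBelow M := ⟨0, fun r ⟨x, _, hr⟩ => hr ▸ norm_nonneg _⟩
  have hCbdd : BddBelow C := ⟨0, fun r ⟨x, _, hr⟩ => hr ▸ norm_nonneg _⟩
  have hmu : minMod T = 0 := by
    have hnonneg : (0 : ℝ) ≤ sInf M :=
      le_csInf hMne (fun r ⟨x, _, hr⟩ => hr ▸ norm_nonneg _)
    have hle : sInf M ≤ 0 := by
      by_contra hpos
      push_neg at hpos
      apply hnu
      rw [main]
      refine ⟨sInf M, hpos, fun x => ?_⟩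
      rcases eq_or_ne x 0 with rfl | hx
      · simp
      · have hnx : ‖x‖ ≠ 0 := norm_ne_zero_iff.2 hx
        have hxpos : 0 < ‖x‖ := lt_of_le_of_ne (norm_nonneg x) (Ne.symm hnx)
        have hmem : ‖T (((‖x‖ : ℂ))⁻¹ • x)‖ ∈ M := by
          refine ⟨((‖x‖ : ℂ))⁻¹ • x, ?_, rfl⟩
          rw [norm_smul, norm_inv, Complex.norm_real, Real.norm_eq_abs,
            abs_of_pos hxpos, inv_mul_cancel₀ hnx]
        have h1 : sInf M ≤ ‖T (((‖x‖ : ℂ))⁻¹ • x)‖ := csInf_le hMbdd hmem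
        rw [map_smul, norm_smul, norm_inv, Complex.norm_real, Real.norm_eq_abs,
          abs_of_pos hxpos] at h1
        have h2 := mul_le_mul_of_nonneg_right h1 (norm_nonneg x)
        calc sInf M * ‖x‖ ≤ (‖x‖⁻¹ * ‖T x‖) * ‖x‖ := h2
          _ = ‖T x‖ := by
              rw [mul_comm (‖x‖⁻¹) _, mul_assoc, inv_mul_cancel₀ hnx, mul_one]
    exact le_antisymm hle hnonneg
  refine ⟨?_, hmu⟩
  have hnonneg : (0 : ℝ) ≤ sInf C :=
    le_csInf ⟨‖J x₀ (T x₀)‖, x₀, hx₀, rfl⟩ (fun r ⟨x, _, hr⟩ => hr ▸ norm_nonneg _)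
  have hle : ∀ ε > (0 : ℝ), sInf C < ε := by
    intro ε hε
    have : sInf M < ε := by rw [show sInf M = 0 from hmu]; exact hε
    obtain ⟨r, ⟨x, hx1, hr⟩, hrε⟩ := exists_lt_of_csInf_lt hMne this
    have hmem : ‖J x (T x)‖ ∈ C := ⟨x, hx1, rfl⟩
    have hb : ‖J x (T x)‖ ≤ ‖T x‖ := by
      calc ‖J x (T x)‖ ≤ ‖J x‖ * ‖T x‖ := ContinuousLinearMap.le_opNorm _ _
        _ = ‖T x‖ := by rw [hJnorm, hx1, one_mul]
    exact lt_of_le_of_lt (le_trans (csInf_le hCbdd hmem) hb) (hr ▸ hrε)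
  have : sInf C ≤ 0 := by
    by_contra h
    push_neg at h
    exact absurd (hle (sInf C) h) (lt_irrefl _)
  exact le_antisymm this hnonneg
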